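/- Let L > 0, let ς_Ne > 0 and ς_Di > 0 be real numbers, and let λ ∈ ℂ with λ ≠ 0 be such that the polynomial P_λ(μ) = μ³ + μ + λ has three pairwise distinct roots. Suppose φ₁, φ₂ : ℝ → ℂ both satisfy the KdV spectral ODE with parameter λ on [0,L], satisfy the boundary conditions φ₂(0) = φ₁(0), ς_Ne·φ₁''(0) + ς_Di·φ₂''(0) = 0, φ₁(L) = φ₂(L) = 0, φ₁'(0) = φ₂'(0) = 0, φ₁'(L) = 0, φ₂''(L) = 0, and suppose moreover φ₁''(L) ≠ 0 and φ₁''(0) ≠ φ₂''(0). Then φ₂'(L) = 0. -/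

import Mathlib

/-- A function `φ : ℝ → ℂ` satisfies the KdV spectral ODE with parameter `lam` on `[0, L]`:
it is three times continuously differentiable and `lam·φ + φ' + φ''' = 0` on `[0, L]`. -/
def KdVSpectralODE (lam : ℂ) (L : ℝ) (φ : ℝ → ℂ) : Prop :=
  ContDiff ℝ 3 φ ∧
    ∀ x ∈ Set.Icc (0 : ℝ) L, lam * φ x + deriv φ x + iteratedDeriv 3 φ x = 0

section KdVAux
open Set

lemma kdv_wronskian_eq (L : ℝ) (hL : 0 ≤ L) (lam : ℂ)
    (u₀ u₁ u₂ v₀ v₁ v₂ w₀ w₁ w₂ : ℝ → ℂ)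
    (hu₀ : ∀ x ∈ Icc (0:ℝ) L, HasDerivAt u₀ (u₁ x) x)
    (hu₁ : ∀ x ∈ Icc (0:ℝ) L, HasDerivAt u₁ (u₂ x) x)
    (hu₂ : ∀ x ∈ Icc (0:ℝ) L, HasDerivAt u₂ (-lam * u₀ x - u₁ x) x)
    (hv₀ : ∀ x ∈ Icc (0:ℝ) L, HasDerivAt v₀ (v₁ x) x)
    (hv₁ : ∀ x ∈ Icc (0:ℝ) L, HasDerivAt v₁ (v₂ x) x)
    (hv₂ : ∀ x ∈ Icc (0:ℝ) L, HasDerivAt v₂ (-lam * v₀ x - v₁ x) x)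
    (hw₀ : ∀ x ∈ Icc (0:ℝ) L, HasDerivAt w₀ (w₁ x) x)
    (hw₁ : ∀ x ∈ Icc (0:ℝ) L, HasDerivAt w₁ (w₂ x) x)
    (hw₂ : ∀ x ∈ Icc (0:ℝ) L, HasDerivAt w₂ (-lam * w₀ x - w₁ x) x) :
    u₀ L * (v₁ L * w₂ L - v₂ L * w₁ L) - v₀ L * (u₁ L * w₂ L - u₂ L * w₁ L)
      + w₀ L * (u₁ L * v₂ L - u₂ L * v₁ L)
    = u₀ 0 * (v₁ 0 * w₂ 0 - v₂ 0 * w₁ 0) - v₀ 0 * (u₁ 0 * w₂ 0 - u₂ 0 * w₁ 0)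
      + w₀ 0 * (u₁ 0 * v₂ 0 - u₂ 0 * v₁ 0) := by
  set W : ℝ → ℂ := fun x =>
    u₀ x * (v₁ x * w₂ x - v₂ x * w₁ x) - v₀ x * (u₁ x * w₂ x - u₂ x * w₁ x)
      + w₀ x * (u₁ x * v₂ x - u₂ x * v₁ x) with hW
  have key : ∀ x ∈ Icc (0:ℝ) L, HasDerivAt W 0 x := by
    intro x hx
    have H := (((hu₀ x hx).mul (((hv₁ x hx).mul (hw₂ x hx)).sub
          ((hv₂ x hx).mul (hw₁ x hx)))).sub
        ((hv₀ x hx).mul (((hu₁ x hx).mul (hw₂ x hx)).sub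
          ((hu₂ x hx).mul (hw₁ x hx))))).add
        ((hw₀ x hx).mul (((hu₁ x hx).mul (hv₂ x hx)).sub
          ((hu₂ x hx).mul (hv₁ x hx))))
    convert H using 1
    · rfl
    · rfl
    · simp only [Pi.mul_apply, Pi.sub_apply]; ring
  have hcont : ContinuousOn W (Icc (0:ℝ) L) := fun x hx =>
    (key x hx).continuousAt.continuousWithinAt
  have := constant_of_has_deriv_right_zero hcont (fun x hx =>
    ((key x (Ico_subset_Icc_self hx)).hasDerivWithinAt))
  exact this L (right_mem_Icc.mpr hL)

lemma kdv_derivs (lam : ℂ) (L : ℝ) (φ : ℝ → ℂ) (h : KdVSpectralODE lam L φ) :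
    (∀ x ∈ Icc (0:ℝ) L, HasDerivAt φ (deriv φ x) x) ∧
    (∀ x ∈ Icc (0:ℝ) L, HasDerivAt (deriv φ) (iteratedDeriv 2 φ x) x) ∧
    (∀ x ∈ Icc (0:ℝ) L, HasDerivAt (iteratedDeriv 2 φ) (-lam * φ x - deriv φ x) x) ∧
    (∀ x ∈ Icc (0:ℝ) L,
      HasDerivAt (fun y => -lam * φ y - deriv φ y)
        (-lam * deriv φ x - iteratedDeriv 2 φ x) x) := by
  obtain ⟨hc, hode⟩ := h
  have h3 : ContDiff ℝ (2+1) φ := by exact_mod_cast hc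
  have hd0 : Differentiable ℝ φ := (contDiff_succ_iff_deriv.mp h3).1
  have hc2 : ContDiff ℝ 2 (deriv φ) := (contDiff_succ_iff_deriv.mp h3).2.2
  have h2' : ContDiff ℝ (1+1) (deriv φ) := by exact_mod_cast hc2
  have hd1 : Differentiable ℝ (deriv φ) := (contDiff_succ_iff_deriv.mp h2').1
  have hc1 : ContDiff ℝ 1 (deriv (deriv φ)) := (contDiff_succ_iff_deriv.mp h2').2.2
  have hd2 : Differentiable ℝ (deriv (deriv φ)) := hc1.differentiable one_ne_zero
  have e2 : iteratedDeriv 2 φ = deriv (deriv φ) := by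
    rw [show (2:ℕ) = 1+1 from rfl, iteratedDeriv_succ, iteratedDeriv_one]
  have e3 : iteratedDeriv 3 φ = deriv (iteratedDeriv 2 φ) := by
    rw [show (3:ℕ) = 2+1 from rfl, iteratedDeriv_succ]
  refine ⟨fun x _ => (hd0 x).hasDerivAt, fun x _ => ?_, fun x hx => ?_, fun x _ => ?_⟩
  · rw [e2]; exact (hd1 x).hasDerivAt
  · have hval : deriv (deriv (deriv φ)) x = -lam * φ x - deriv φ x := by
      have h0 := hode x hx
      rw [e3, e2] at h0
      linear_combination h0
    rw [e2]
    exact hval ▸ (hd2 x).hasDerivAt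
  · have := (((hd0 x).hasDerivAt.const_mul (-lam)).sub
      ((hd1 x).hasDerivAt)) -- deriv of fun y => -lam * φ y - deriv φ y
    rw [e2]
    exact this

end KdVAux

theorem stmt4 (L : ℝ) (hL : 0 < L) (ςNe ςDi : ℝ) (hNe : 0 < ςNe) (hDi : 0 < ςDi)
    (lam : ℂ) (hlam : lam ≠ 0)
    (hroots : ∃ μ₀ μ₁ μ₂ : ℂ, μ₀ ≠ μ₁ ∧ μ₀ ≠ μ₂ ∧ μ₁ ≠ μ₂ ∧
      μ₀ ^ 3 + μ₀ + lam = 0 ∧ μ₁ ^ 3 + μ₁ + lam = 0 ∧ μ₂ ^ 3 + μ₂ + lam = 0)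
    (φ₁ φ₂ : ℝ → ℂ)
    (h1 : KdVSpectralODE lam L φ₁) (h2 : KdVSpectralODE lam L φ₂)
    (hb0 : φ₂ 0 = φ₁ 0)
    (hb1 : (ςNe : ℂ) * iteratedDeriv 2 φ₁ 0 + (ςDi : ℂ) * iteratedDeriv 2 φ₂ 0 = 0)
    (hb2 : φ₁ L = 0) (hb3 : φ₂ L = 0)
    (hb4 : deriv φ₁ 0 = 0) (hb5 : deriv φ₂ 0 = 0)
    (hb6 : deriv φ₁ L = 0) (hb7 : iteratedDeriv 2 φ₂ L = 0)
    (hne1 : iteratedDeriv 2 φ₁ L ≠ 0)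
    (hne2 : iteratedDeriv 2 φ₁ 0 ≠ iteratedDeriv 2 φ₂ 0) :
    deriv φ₂ L = 0 := by
  obtain ⟨A1, B1, C1, D1⟩ := kdv_derivs lam L φ₁ h1
  obtain ⟨A2, B2, C2, D2⟩ := kdv_derivs lam L φ₂ h2
  -- First Wronskian: columns (φ₂, φ₁', φ₂')
  have Wa := kdv_wronskian_eq L hL.le lam
    φ₂ (deriv φ₂) (iteratedDeriv 2 φ₂)
    (deriv φ₁) (iteratedDeriv 2 φ₁) (fun y => -lam * φ₁ y - deriv φ₁ y)
    (deriv φ₂) (iteratedDeriv 2 φ₂) (fun y => -lam * φ₂ y - deriv φ₂ y)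
    A2 B2 C2 B1 C1 D1 B2 C2 D2
  simp only [hb2, hb3, hb4, hb5, hb6, hb7, hb0] at Wa
  have hc0 : φ₁ 0 = 0 := by
    have hkey : lam * φ₁ 0 ^ 2 * (iteratedDeriv 2 φ₁ 0 - iteratedDeriv 2 φ₂ 0) = 0 := by
      linear_combination Wa
    rcases mul_eq_zero.mp hkey with h | h
    · rcases mul_eq_zero.mp h with h' | h'
      · exact absurd h' hlam
      · exact pow_eq_zero_iff (by norm_num) |>.mp h'
    · exact absurd (sub_eq_zero.mp h) hne2
  have hc0' : φ₂ 0 = 0 := hb0.trans hc0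
  -- Second Wronskian: columns (φ₁, φ₁', φ₂')
  have Wb := kdv_wronskian_eq L hL.le lam
    φ₁ (deriv φ₁) (iteratedDeriv 2 φ₁)
    (deriv φ₁) (iteratedDeriv 2 φ₁) (fun y => -lam * φ₁ y - deriv φ₁ y)
    (deriv φ₂) (iteratedDeriv 2 φ₂) (fun y => -lam * φ₂ y - deriv φ₂ y)
    A1 B1 C1 B1 C1 D1 B2 C2 D2
  simp only [hb2, hb3, hb4, hb5, hb6, hb7, hc0, hc0'] at Wb
  have hkey : iteratedDeriv 2 φ₁ L ^ 2 * deriv φ₂ L = 0 := by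
    linear_combination -Wb
  rcases mul_eq_zero.mp hkey with h | h
  · exact absurd (pow_eq_zero_iff (by norm_num) |>.mp h) hne1
  · exact h
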